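/- Let R_0 be a commutative Noetherian domain, S = R_0[U_1,...,U_s] graded with deg U_i = 1, and let f ∈ S be a nonzero homogeneous polynomial of degree δ. For each d ≥ s, the matrix M(f;d) over R_0 representing multiplication by f from the degree −(d+δ) component to the degree −d component of the module of inverse polynomials R_0[U_1^−,...,U_s^−] (with respect to the monomial bases) has maximal rank, namely rank C(d−1, s−1). -/

import Mathlib

open MvPolynomial

noncomputable section

/-- Index type for the monomial basis of the degree `-d` component of the module of
inverse polynomials `R₀[U₁⁻, …, U_s⁻]`: a basis monomial `U^{-λ}` with all `λᵢ ≥ 1` and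
`∑ λᵢ = d` is encoded by the tuple `μ = λ - 1`, i.e. a tuple `μ : Fin s → ℕ` with
`∑ μᵢ = d - s`. -/
def InvBasis (s d : ℕ) : Type :=
  {μ : Fin s → ℕ // μ ∈ Finset.Nat.antidiagonalTuple s (d - s)}

instance (s d : ℕ) : DecidableEq (InvBasis s d) :=
  inferInstanceAs (DecidableEq {μ : Fin s → ℕ // μ ∈ Finset.Nat.antidiagonalTuple s (d - s)})

instance (s d : ℕ) : Fintype (InvBasis s d) :=
  inferInstanceAs (Fintype {μ : Fin s → ℕ // μ ∈ Finset.Nat.antidiagonalTuple s (d - s)})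

/-- The matrix `M(f;d)` of multiplication by the polynomial `f` (homogeneous of degree `δ`)
from the degree `-(d+δ)` component to the degree `-d` component of the module of inverse
polynomials, with respect to the monomial bases.  The entry in row `ρ` (encoding the
exponent tuple `ρ + 1`) and column `μ` (encoding `μ + 1`) is the coefficient of
`U^{(μ+1)-(ρ+1)} = U^{μ-ρ}` in `f` when `ρ ≤ μ` componentwise, and `0` otherwise. -/
def invMulMatrix {R₀ : Type*} [CommRing R₀] (s : ℕ) (f : MvPolynomial (Fin s) R₀)
    (δ d : ℕ) : Matrix (InvBasis s d) (InvBasis s (d + δ)) R₀ :=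
  fun ρ μ =>
    if ∀ i, ρ.1 i ≤ μ.1 i then
      MvPolynomial.coeff (Finsupp.equivFunOnFinite.symm fun i => μ.1 i - ρ.1 i) f
    else 0

theorem stmt_15 {R₀ : Type*} [CommRing R₀] [IsDomain R₀] [IsNoetherianRing R₀]
    (s : ℕ) (hs : 1 ≤ s) (f : MvPolynomial (Fin s) R₀) (hf : f ≠ 0)
    (δ : ℕ) (hhom : f.IsHomogeneous δ) (d : ℕ) (hd : s ≤ d) :
    (∃ g : InvBasis s d → InvBasis s (d + δ), Function.Injective g ∧
        ((invMulMatrix s f δ d).submatrix id g).det ≠ 0) ∧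
      Fintype.card (InvBasis s d) = (d - 1).choose (s - 1) := by
  classical
  constructor
  · -- choose the lex-leading exponent α of f
    obtain ⟨α, hαmem, hαmax⟩ :=
      Finset.exists_max_image f.support (fun β => toLex β) (support_nonempty.mpr hf)
    have hcα : coeff α f ≠ 0 := mem_support_iff.mp hαmem
    have hαsum : ∑ i, α i = δ := by
      have h1 : ∑ i, α i = α.degree :=
        (Finset.sum_subset (Finset.subset_univ _)
          (fun i _ h => Finsupp.notMem_support_iff.mp h)).symm
      rw [h1]
      by_contra h
      exact hcα (hhom.coeff_eq_zero h)
    -- the injection g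
    have hmem : ∀ ρ : InvBasis s d,
        (fun i => ρ.1 i + α i) ∈ Finset.Nat.antidiagonalTuple s (d + δ - s) := by
      intro ρ
      rw [Finset.Nat.mem_antidiagonalTuple]
      have hρ := Finset.Nat.mem_antidiagonalTuple.mp ρ.2
      rw [Finset.sum_add_distrib, hρ, hαsum]
      omega
    refine ⟨fun ρ => ⟨fun i => ρ.1 i + α i, hmem ρ⟩, ?_, ?_⟩
    · intro ρ σ h
      apply Subtype.ext
      funext i
      have := congrArg (fun x => x.1 i) h
      simpa using this
    · -- determinant nonzero via lower-triangularity w.r.t. lex order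
      letI : LinearOrder (InvBasis s d) :=
        LinearOrder.lift' (fun ρ => toLex (Finsupp.equivFunOnFinite.symm ρ.1))
          (fun a b h => Subtype.ext (Finsupp.equivFunOnFinite.symm.injective (toLex.injective h)))
      set A := (invMulMatrix s f δ d).submatrix id (fun ρ : InvBasis s d =>
        (⟨fun i => ρ.1 i + α i, hmem ρ⟩ : InvBasis s (d + δ))) with hA
      have htri : A.BlockTriangular OrderDual.toDual := by
        intro i j hij
        change i < j at hij
        show invMulMatrix s f δ d i _ = 0
        unfold invMulMatrix
        split_ifs with hle
        · have hle' : ∀ k, i.1 k ≤ j.1 k + α k := hle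
          by_contra hc
          set β : Fin s →₀ ℕ :=
            Finsupp.equivFunOnFinite.symm (fun k => j.1 k + α k - i.1 k) with hβ
          have hβmem : β ∈ f.support := mem_support_iff.mpr hc
          have hβle : toLex β ≤ toLex α := hαmax β hβmem
          have hkey : β + Finsupp.equivFunOnFinite.symm i.1
              = α + Finsupp.equivFunOnFinite.symm j.1 := by
            ext k
            simp only [Finsupp.add_apply, hβ]
            have h1 : ∀ (x : Fin s → ℕ) (k : Fin s),
                (Finsupp.equivFunOnFinite.symm x) k = x k := fun x k => rfl
            rw [h1, h1, h1]
            have := hle' k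
            omega
          have hlt : toLex (Finsupp.equivFunOnFinite.symm i.1)
              < toLex (Finsupp.equivFunOnFinite.symm j.1) := hij
          have h2 : toLex (α + Finsupp.equivFunOnFinite.symm i.1)
              < toLex (α + Finsupp.equivFunOnFinite.symm j.1) := by
            exact add_lt_add_right hlt (toLex α)
          have h3 : toLex (β + Finsupp.equivFunOnFinite.symm i.1)
              ≤ toLex (α + Finsupp.equivFunOnFinite.symm i.1) := by
            exact add_le_add_left hβle _
          rw [hkey] at h3
          exact absurd (h3.trans_lt h2) (lt_irrefl _)
        · rfl
      rw [hA, Matrix.det_of_lowerTriangular _ htri]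
      have hdiag : ∀ ρ : InvBasis s d,
          (invMulMatrix s f δ d).submatrix id (fun ρ : InvBasis s d =>
            (⟨fun i => ρ.1 i + α i, hmem ρ⟩ : InvBasis s (d + δ))) ρ ρ = coeff α f := by
        intro ρ
        show invMulMatrix s f δ d ρ _ = _
        unfold invMulMatrix
        rw [if_pos (fun i => Nat.le_add_right _ _)]
        congr 1
        have : (fun i => ρ.1 i + α i - ρ.1 i) = ⇑α := by
          funext i; omega
        rw [this, Finsupp.equivFunOnFinite_symm_coe]
      rw [Finset.prod_congr rfl (fun ρ _ => hdiag ρ), Finset.prod_const]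
      exact pow_ne_zero _ hcα
  · have e : InvBasis s d ≃ Sym (Fin s) (d - s) :=
      (Equiv.subtypeEquivRight (fun x => Finset.Nat.mem_antidiagonalTuple)).trans
        (Sym.equivNatSumOfFintype (Fin s) (d - s)).symm
    rw [Fintype.card_congr e, Sym.card_sym_eq_choose]
    simp only [Fintype.card_fin]
    rw [show s + (d - s) - 1 = d - 1 by omega, show d - s = (d - 1) - (s - 1) by omega,
      Nat.choose_symm (by omega)]


end
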